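/- There exists a constant C < ∞ such that for every continuously differentiable function f : ℝ → ℂ whose derivative lies in L²(ℝ) and every ε > 0, one has ‖f‖_{L²([ε,2ε])} ≤ C·‖f‖_{L²([−2ε,−ε])} + C·ε·‖f′‖_{L²(ℝ)}. -/

import Mathlib

open MeasureTheory Set

/-- The `L²` norm of `f` over the set `J ⊆ ℝ` (w.r.t. Lebesgue measure). -/
noncomputable def L2 (f : ℝ → ℂ) (J : Set ℝ) : ℝ := (∫ x in J, ‖f x‖ ^ 2) ^ ((1 : ℝ)/2)

/-- Lemma 2, first inequality: `‖f‖_{L²[ε,2ε]} ≤ C‖f‖_{L²[-2ε,-ε]} + Cε‖f′‖_{L²(ℝ)}`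
for `C¹` functions with derivative in `L²(ℝ)`. -/
theorem lemma2_first :
    ∃ C : ℝ, ∀ f : ℝ → ℂ, ContDiff ℝ 1 f → MemLp (deriv f) 2 (volume : Measure ℝ) →
      ∀ ε : ℝ, 0 < ε →
        L2 f (Icc ε (2 * ε))
          ≤ C * L2 f (Icc (-(2 * ε)) (-ε)) + C * ε * L2 (deriv f) univ := by
  use 3
  intro f hf hf' ε hε
  have hc : Continuous f := hf.continuous
  have hc' : Continuous (deriv f) := hf.continuous_deriv le_rfl
  set A : ℝ := ∫ x in Icc (-(2 * ε)) (-ε), ‖f x‖ ^ 2 with hA_def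
  set B : ℝ := ∫ x in (univ : Set ℝ), ‖deriv f x‖ ^ 2 with hB_def
  have hA : 0 ≤ A := setIntegral_nonneg measurableSet_Icc fun x _ => by positivity
  have hB : 0 ≤ B := setIntegral_nonneg MeasurableSet.univ fun x _ => by positivity
  have intB : Integrable (fun x => ‖deriv f x‖ ^ 2) volume := by
    have := hf'.integrable_norm_rpow (by norm_num) (by norm_num)
    simpa [ENNReal.toReal_ofNat, Real.rpow_natCast] using this
  have hBeq : B = ∫ x, ‖deriv f x‖ ^ 2 := by rw [hB_def, Measure.restrict_univ]
  -- choose a point `y₀` in `[-2ε, -ε]` minimizing `‖f ·‖`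
  have hne : (Icc (-(2 * ε)) (-ε)).Nonempty := ⟨-ε, by constructor <;> nlinarith⟩
  obtain ⟨y₀, hy₀mem, hy₀min⟩ :=
    isCompact_Icc.exists_isMinOn hne (hc.norm.continuousOn)
  -- `ε * ‖f y₀‖ ^ 2 ≤ A`
  have key1 : ε * ‖f y₀‖ ^ 2 ≤ A := by
    have h1 : ∫ _y in Icc (-(2 * ε)) (-ε), ‖f y₀‖ ^ 2 = ε * ‖f y₀‖ ^ 2 := by
      rw [setIntegral_const, measureReal_def, Real.volume_Icc, smul_eq_mul]
      rw [ENNReal.toReal_ofReal (by linarith)]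
      ring_nf
    rw [← h1]
    apply setIntegral_mono_on (integrableOn_const (by
      rw [Real.volume_Icc]; exact ENNReal.ofReal_ne_top))
      ((hc.norm.pow 2).continuousOn.integrableOn_compact isCompact_Icc) measurableSet_Icc
    intro y hy
    exact pow_le_pow_left₀ (norm_nonneg _) (hy₀min hy) 2
  -- pointwise bound on `[ε, 2ε]`
  have ptwise : ∀ x ∈ Icc ε (2 * ε), ‖f x‖ ^ 2 ≤ 2 * ‖f y₀‖ ^ 2 + 8 * ε * B := by
    intro x hx
    have hy₀x : y₀ ≤ x := le_trans (le_trans hy₀mem.2 (by linarith)) hx.1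
    -- FTC
    have hftc : f x - f y₀ = ∫ t in y₀..x, deriv f t := by
      rw [intervalIntegral.integral_deriv_eq_sub (fun t _ => (hf.differentiable one_ne_zero).differentiableAt)
        (hc'.intervalIntegrable _ _)]
    -- bound the interval integral of the derivative via Cauchy–Schwarz
    have hCS : (∫ t in Icc y₀ x, ‖deriv f t‖) ≤ Real.sqrt (x - y₀) * Real.sqrt B := by
      have hfin : IsFiniteMeasure (volume.restrict (Icc y₀ x)) :=
        ⟨by rw [Measure.restrict_apply_univ]; exact measure_Icc_lt_top⟩
      have h1 : MemLp (deriv f) (ENNReal.ofReal 2) (volume.restrict (Icc y₀ x)) := by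
        rw [show ENNReal.ofReal 2 = 2 by norm_num]
        exact hf'.mono_measure Measure.restrict_le_self
      have h2 : MemLp (fun _ : ℝ => (1 : ℂ)) (ENNReal.ofReal 2) (volume.restrict (Icc y₀ x)) :=
        memLp_const 1
      have hCS0 := integral_mul_norm_le_Lp_mul_Lq
        (Real.HolderConjugate.two_two : Real.HolderConjugate 2 2) h1 h2
      have hxy : (0:ℝ) ≤ x - y₀ := by linarith
      have e1 : (∫ a in Icc y₀ x, ‖deriv f a‖ * ‖(1:ℂ)‖) = ∫ a in Icc y₀ x, ‖deriv f a‖ := by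
        simp
      have e2 : (∫ a in Icc y₀ x, ‖(1:ℂ)‖ ^ (2:ℝ)) = x - y₀ := by
        simp [Real.volume_Icc, ENNReal.toReal_ofReal hxy, hy₀x]
      have e3 : (∫ a in Icc y₀ x, ‖deriv f a‖ ^ (2:ℝ)) ≤ B := by
        rw [hBeq]
        have : (∫ a in Icc y₀ x, ‖deriv f a‖ ^ (2:ℝ)) = ∫ a in Icc y₀ x, ‖deriv f a‖ ^ 2 := by
          congr 1; ext a; rw [Real.rpow_two]
        rw [this]
        exact setIntegral_le_integral intB (ae_of_all _ fun a => by positivity)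
      rw [e1, e2] at hCS0
      have e4 : (∫ a in Icc y₀ x, ‖deriv f a‖ ^ (2:ℝ)) ^ ((1:ℝ)/2) ≤ B ^ ((1:ℝ)/2) :=
        Real.rpow_le_rpow (integral_nonneg fun a => Real.rpow_nonneg (norm_nonneg _) _)
          e3 (by norm_num)
      calc (∫ t in Icc y₀ x, ‖deriv f t‖)
          ≤ (∫ a in Icc y₀ x, ‖deriv f a‖ ^ (2:ℝ)) ^ ((1:ℝ)/2) * (x - y₀) ^ ((1:ℝ)/2) := hCS0
        _ ≤ B ^ ((1:ℝ)/2) * (x - y₀) ^ ((1:ℝ)/2) :=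
            mul_le_mul_of_nonneg_right e4 (Real.rpow_nonneg hxy _)
        _ = Real.sqrt (x - y₀) * Real.sqrt B := by
            rw [Real.sqrt_eq_rpow, Real.sqrt_eq_rpow]; ring
    -- bound `‖f x‖`
    have hnorm : ‖f x‖ ≤ ‖f y₀‖ + Real.sqrt (x - y₀) * Real.sqrt B := by
      have h0 : f x = f y₀ + ∫ t in y₀..x, deriv f t := by rw [← hftc]; ring
      have h1 : ‖∫ t in y₀..x, deriv f t‖ ≤ ∫ t in y₀..x, ‖deriv f t‖ :=
        intervalIntegral.norm_integral_le_integral_norm hy₀x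
      have h2 : (∫ t in y₀..x, ‖deriv f t‖) = ∫ t in Icc y₀ x, ‖deriv f t‖ := by
        rw [intervalIntegral.integral_of_le hy₀x, ← integral_Icc_eq_integral_Ioc]
      calc ‖f x‖ = ‖f y₀ + ∫ t in y₀..x, deriv f t‖ := by rw [← h0]
        _ ≤ ‖f y₀‖ + ‖∫ t in y₀..x, deriv f t‖ := norm_add_le _ _
        _ ≤ ‖f y₀‖ + Real.sqrt (x - y₀) * Real.sqrt B := by
            rw [h2] at h1; linarith [le_trans h1 hCS]
    have hxy4 : x - y₀ ≤ 4 * ε := by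
      have := hx.2; have := hy₀mem.1; linarith
    have hs1 := Real.sq_sqrt (by linarith [hy₀x] : (0:ℝ) ≤ x - y₀)
    have hs2 := Real.sq_sqrt hB
    have hs3 := Real.sqrt_nonneg (x - y₀)
    have hs4 := Real.sqrt_nonneg B
    calc ‖f x‖ ^ 2 ≤ (‖f y₀‖ + Real.sqrt (x - y₀) * Real.sqrt B) ^ 2 := by
          apply pow_le_pow_left₀ (norm_nonneg _) hnorm
      _ ≤ 2 * ‖f y₀‖ ^ 2 + 8 * ε * B := by
          nlinarith [sq_nonneg (‖f y₀‖ - Real.sqrt (x - y₀) * Real.sqrt B), norm_nonneg (f y₀),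
            mul_nonneg hs3 hs4, sq_nonneg (Real.sqrt (x - y₀) * Real.sqrt B)]
  -- integrate the pointwise bound
  have key2 : (∫ x in Icc ε (2 * ε), ‖f x‖ ^ 2) ≤ 2 * A + 8 * ε ^ 2 * B := by
    have h1 : (∫ x in Icc ε (2 * ε), ‖f x‖ ^ 2)
        ≤ ∫ _x in Icc ε (2 * ε), (2 * ‖f y₀‖ ^ 2 + 8 * ε * B) := by
      apply setIntegral_mono_on
        ((hc.norm.pow 2).continuousOn.integrableOn_compact isCompact_Icc)
        (integrableOn_const (by rw [Real.volume_Icc]; exact ENNReal.ofReal_ne_top))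
        measurableSet_Icc ptwise
    have h2 : (∫ _x in Icc ε (2 * ε), (2 * ‖f y₀‖ ^ 2 + 8 * ε * B)) =
        ε * (2 * ‖f y₀‖ ^ 2 + 8 * ε * B) := by
      rw [setIntegral_const, measureReal_def, Real.volume_Icc, smul_eq_mul,
        ENNReal.toReal_ofReal (by linarith)]
      ring
    rw [h2] at h1
    nlinarith [key1, hB, hε.le]
  -- conclude
  have hI : 0 ≤ ∫ x in Icc ε (2 * ε), ‖f x‖ ^ 2 :=
    setIntegral_nonneg measurableSet_Icc fun x _ => by positivity
  unfold L2
  rw [← hA_def, ← hB_def, ← Real.sqrt_eq_rpow, ← Real.sqrt_eq_rpow, ← Real.sqrt_eq_rpow]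
  have hsA := Real.sq_sqrt hA
  have hsB := Real.sq_sqrt hB
  have hsA' := Real.sqrt_nonneg A
  have hsB' := Real.sqrt_nonneg B
  calc Real.sqrt (∫ x in Icc ε (2 * ε), ‖f x‖ ^ 2)
      ≤ Real.sqrt (2 * A + 8 * ε ^ 2 * B) := Real.sqrt_le_sqrt key2
    _ ≤ 3 * Real.sqrt A + 3 * ε * Real.sqrt B := by
        have hle : 2 * A + 8 * ε ^ 2 * B ≤ (3 * Real.sqrt A + 3 * ε * Real.sqrt B) ^ 2 := by
          nlinarith [mul_nonneg hsA' hsB', mul_nonneg hε.le (mul_nonneg hsA' hsB'), hε.le]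
        have hpos : 0 ≤ 3 * Real.sqrt A + 3 * ε * Real.sqrt B :=
          add_nonneg (by linarith) (by nlinarith)
        have h3 := Real.sqrt_le_sqrt hle
        rwa [Real.sqrt_sq hpos] at h3
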